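/- Let E : ℂ² → (ℂ²)^{⊗7} be the isometry with E|b⟩ = |b̄⟩ (the Steane encoder), let the 49-qubit concatenated Steane code be the image of the isometry E^{⊗7} ∘ E in (ℂ²)^{⊗49}, and let Π be the orthogonal projection onto it. Then this code has distance exactly 9: for every 49-qubit Pauli operator P of weight at most 8 there is a scalar c_P ∈ ℂ with Π P Π = c_P Π, and there exists a 49-qubit Pauli operator Q of weight 9 such that Π Q Π is not a scalar multiple of Π. -/

import Mathlib

open scoped Classical
open Matrix

noncomputable section

/-- basis vector `|x⟩` -/
def bvec {α : Type*} (x : α) : α → ℂ := fun y => if y = x then 1 else 0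

/-- inner product `⟪v, w⟫` on basis-indexed amplitude vectors -/
def qInner {α : Type*} [Fintype α] (v w : α → ℂ) : ℂ :=
  ∑ x, (starRingEnd ℂ) (v x) * w x

/-- Pauli X -/
def σx : Matrix Bool Bool ℂ := Matrix.of fun a b => if a = !b then 1 else 0
/-- Pauli Y -/
def σy : Matrix Bool Bool ℂ :=
  Matrix.of fun a b => if a = !b then (if a then Complex.I else -Complex.I) else 0
/-- Pauli Z -/
def σz : Matrix Bool Bool ℂ := Matrix.of fun a b => if a = b then (if a then -1 else 1) else 0
/-- Hadamard -/
def Hgate : Matrix Bool Bool ℂ :=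
  Matrix.of fun a b => (if a && b then -1 else 1) / (Real.sqrt 2 : ℂ)
/-- phase gate S = diag(1, i) -/
def Sgate : Matrix Bool Bool ℂ :=
  Matrix.of fun a b => if a = b then (if a then Complex.I else 1) else 0
/-- Z(θ) = diag(1, e^{iθ}) -/
def Zrot (θ : ℝ) : Matrix Bool Bool ℂ :=
  Matrix.of fun a b => if a = b then (if a then Complex.exp (θ * Complex.I) else 1) else 0

/-- tensor product over `ι` of single-qubit matrices -/
def tensMat {ι : Type*} [Fintype ι] (P : ι → Matrix Bool Bool ℂ) :
    Matrix (ι → Bool) (ι → Bool) ℂ :=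
  Matrix.of fun x y => ∏ i, P i (x i) (y i)

/-- CNOT with control `i`, target `t`, in one register -/
def CNOT {ι : Type*} (i t : ι) : Matrix (ι → Bool) (ι → Bool) ℂ :=
  Matrix.of fun y x => if y = Function.update x t (xor (x i) (x t)) then 1 else 0

/-- Z(θ) applied to qubit `t` -/
def ZrotAt {ι : Type*} (θ : ℝ) (t : ι) : Matrix (ι → Bool) (ι → Bool) ℂ :=
  Matrix.of fun y x => if y = x then (if x t then Complex.exp (θ * Complex.I) else 1) else 0

/-- `parityOdd A x` : the bits of `x` indexed by `A` have odd parity -/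
def parityOdd {ι : Type*} (A : Finset ι) (x : ι → Bool) : Prop :=
  (A.filter fun i => x i = true).card % 2 = 1

/-- `∏_{i ∈ A} Z_i` -/
def ZA {ι : Type*} [Fintype ι] (A : Finset ι) : Matrix (ι → Bool) (ι → Bool) ℂ :=
  tensMat fun i => if i ∈ A then σz else 1

/-- `∏_{j ∈ B} X_j` -/
def XB {ι : Type*} [Fintype ι] (B : Finset ι) : Matrix (ι → Bool) (ι → Bool) ℂ :=
  tensMat fun j => if j ∈ B then σx else 1

/-- the joint `+1`-eigenspace of a set of matrices, as a submodule -/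
def jointFixed {ι : Type*} [Fintype ι] (S : Set (Matrix (ι → Bool) (ι → Bool) ℂ)) :
    Submodule ℂ ((ι → Bool) → ℂ) where
  carrier := {v | ∀ g ∈ S, g.mulVec v = v}
  add_mem' := by
    intro a b ha hb g hg
    rw [Matrix.mulVec_add, ha g hg, hb g hg]
  zero_mem' := by
    intro g hg
    rw [Matrix.mulVec_zero]
  smul_mem' := by
    intro c a ha g hg
    rw [Matrix.mulVec_smul, ha g hg]

/-- a matrix on qubits `ι` acts only on the qubits in `A` (identity elsewhere) -/
def ActsOnlyOn {ι : Type*} (M : Matrix (ι → Bool) (ι → Bool) ℂ) (A : Set ι) : Prop :=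
  ∃ W : Matrix (A → Bool) (A → Bool) ℂ,
    ∀ x y, M x y =
      if ∀ i, i ∉ A → x i = y i then W (fun i => x i.val) (fun i => y i.val) else 0

/-- an `ι`-qubit Pauli operator `i^c · ⨂_i P_i` -/
structure PauliOp (ι : Type*) [Fintype ι] where
  phase : Fin 4
  fac : ι → Matrix Bool Bool ℂ
  isPauli : ∀ i, fac i = 1 ∨ fac i = σx ∨ fac i = σy ∨ fac i = σz

def PauliOp.toMatrix {ι : Type*} [Fintype ι] (p : PauliOp ι) :
    Matrix (ι → Bool) (ι → Bool) ℂ :=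
  Complex.I ^ (p.phase : ℕ) • tensMat p.fac

/-- number of non-identity tensor factors -/
def PauliOp.weight {ι : Type*} [Fintype ι] (p : PauliOp ι) : ℕ :=
  Set.ncard {i | p.fac i ≠ 1}

/-- tensor product of states of two registers -/
def tens2 {ι κ : Type*} (v : (ι → Bool) → ℂ) (w : (κ → Bool) → ℂ) :
    (ι → Bool) × (κ → Bool) → ℂ :=
  fun p => v p.1 * w p.2

/-- CNOT with control qubit `i` of the first register and target qubit `j` of the second -/
def CNOT2 {ι κ : Type*} (i : ι) (j : κ) :
    Matrix ((ι → Bool) × (κ → Bool)) ((ι → Bool) × (κ → Bool)) ℂ :=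
  Matrix.of fun y x =>
    if y = (x.1, Function.update x.2 j (xor (x.1 i) (x.2 j))) then 1 else 0

-- Steane code
def steaneGen : Fin 3 → (Fin 7 → Bool) :=
  ![![false, false, false, true, true, true, true],
    ![false, true, true, false, false, true, true],
    ![true, false, true, false, true, false, true]]

/-- the binary [7,3] code generated by 0001111, 0110011, 1010101 -/
def hammingC : Set (Fin 7 → Bool) :=
  {c | ∃ a b e : Bool,
    c = fun i => xor (a && steaneGen 0 i) (xor (b && steaneGen 1 i) (e && steaneGen 2 i))}

/-- Steane logical basis: `steane false = |0̄⟩`, `steane true = |1̄⟩ = X^{⊗7}|0̄⟩` -/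
def steane : Bool → ((Fin 7 → Bool) → ℂ) := fun b =>
  if b then (tensMat fun _ => σx).mulVec (fun y => if y ∈ hammingC then ((Real.sqrt 8 : ℂ))⁻¹ else 0)
  else fun y => if y ∈ hammingC then ((Real.sqrt 8 : ℂ))⁻¹ else 0

-- 5-qubit code
def fiveStab : Fin 4 → Matrix (Fin 5 → Bool) (Fin 5 → Bool) ℂ :=
  ![tensMat ![σx, σz, σz, σx, 1],
    tensMat ![1, σx, σz, σz, σx],
    tensMat ![σx, 1, σx, σz, σz],
    tensMat ![σz, σx, 1, σx, σz]]

def fiveCodespace : Submodule ℂ ((Fin 5 → Bool) → ℂ) :=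
  jointFixed (Set.range fiveStab)

/-- a choice of logical basis for the 5-qubit code -/
def fiveLogical (v : Bool → ((Fin 5 → Bool) → ℂ)) : Prop :=
  (∀ b, v b ∈ fiveCodespace) ∧ (∀ b, qInner (v b) (v b) = 1) ∧
  (tensMat fun _ : Fin 5 => σz).mulVec (v false) = v false ∧
  (tensMat fun _ : Fin 5 => σz).mulVec (v true) = -(v true) ∧
  (tensMat fun _ : Fin 5 => σx).mulVec (v false) = v true

-- [[15,1,3]] Reed–Muller code
def rmBit (i : Fin 15) (j : Fin 4) : Bool := Nat.testBit (i.val + 1) j.val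

def rmXstab (j : Fin 4) : Matrix (Fin 15 → Bool) (Fin 15 → Bool) ℂ :=
  tensMat fun i => if rmBit i j then σx else 1

def rmZstab (j k : Fin 4) : Matrix (Fin 15 → Bool) (Fin 15 → Bool) ℂ :=
  tensMat fun i => if rmBit i j && rmBit i k then σz else 1

def rmCodespace : Submodule ℂ ((Fin 15 → Bool) → ℂ) :=
  jointFixed ({M | ∃ j, M = rmXstab j} ∪ {M | ∃ j k, j < k ∧ M = rmZstab j k})

/-- a choice of logical basis for the [[15,1,3]] Reed–Muller code -/
def rmLogical (w : Bool → ((Fin 15 → Bool) → ℂ)) : Prop :=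
  (∀ b, w b ∈ rmCodespace) ∧ (∀ b, qInner (w b) (w b) = 1) ∧
  (tensMat fun _ : Fin 15 => σz).mulVec (w false) = w false ∧
  (tensMat fun _ : Fin 15 => σz).mulVec (w true) = -(w true) ∧
  (tensMat fun _ : Fin 15 => σx).mulVec (w false) = w true


/-- the logical basis state `b` of the 49-qubit concatenated Steane code, i.e. the
image of `|b⟩` under `E^{⊗7} ∘ E` where `E` is the Steane encoder. -/
def steaneConcat (b : Bool) : (Fin 7 × Fin 7 → Bool) → ℂ :=
  fun y => ∑ x : Fin 7 → Bool, steane b x * ∏ m, steane (x m) (fun i => y (m, i))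
set_option maxRecDepth 10000
namespace Stmt16Aux

abbrev V7 := Fin 7 → Bool
abbrev V49 := Fin 7 × Fin 7 → Bool

/-- codeword of the classical [7,3] code from coefficients -/
def cw (t : Fin 3 → Bool) : V7 := fun i =>
  xor (t 0 && steaneGen 0 i) (xor (t 1 && steaneGen 1 i) (t 2 && steaneGen 2 i))

lemma mem_hammingC_iff (c : V7) : c ∈ hammingC ↔ ∃ t, c = cw t := by
  constructor
  · rintro ⟨a, b, e, rfl⟩
    exact ⟨![a, b, e], rfl⟩
  · rintro ⟨t, rfl⟩
    exact ⟨t 0, t 1, t 2, rfl⟩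

lemma cw_xor : ∀ t t' : Fin 3 → Bool,
    (fun i => xor (cw t i) (cw t' i)) = cw (fun k => xor (t k) (t' k)) := by decide

lemma cw_zero : cw (fun _ => false) = fun _ => false := by decide

lemma cw_ne_one : ∀ t : Fin 3 → Bool, cw t ≠ fun _ => true := by decide

lemma cw_inj : ∀ t t' : Fin 3 → Bool, cw t = cw t' → t = t' := by decide

lemma cw_ne_not_cw : ∀ t t' : Fin 3 → Bool, cw t ≠ fun i => !(cw t' i) := by decide

/-- affine block recognition -/
lemma block_inj : ∀ u u' : Fin 3 → Bool, ∀ c c' : Bool,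
    (fun i : Fin 7 => xor (cw u i) c) = (fun i => xor (cw u' i) c') → u = u' ∧ c = c' := by
  decide

/-- weight of a 7-bit vector -/
def wt7 (v : V7) : ℕ := (Finset.univ.filter fun i => v i = true).card

/-- key distance fact for the 7-bit code: a vector orthogonal to the code with odd
weight has weight at least 3 -/
lemma odd_dual_wt : ∀ v : V7,
    (∀ t : Fin 3 → Bool, (Finset.univ.filter fun i => (cw t i && v i) = true).card % 2 = 0) →
    wt7 v % 2 = 1 → 3 ≤ wt7 v := by decide

lemma not_cw_wt : ∀ u : Fin 3 → Bool, 3 ≤ wt7 (fun i => !(cw u i)) := by decide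

end Stmt16Aux
namespace Stmt16Aux

lemma xor_cancel3 : ∀ a b c : Bool, xor (xor (xor a b) c) (xor b c) = a := by decide

lemma xor_not : ∀ a c : Bool, xor a (!c) = !(xor a c) := by decide

lemma xor_reassemble : ∀ a c d : Bool, a = xor (xor (xor a c) (xor c d)) d := by decide

lemma tensMat_sigmax_mulVec (v : V7 → ℂ) (z : V7) :
    (tensMat fun _ : Fin 7 => σx).mulVec v z = v (fun i => !z i) := by
  unfold Matrix.mulVec dotProduct tensMat σx
  simp only [Matrix.of_apply]
  rw [Finset.sum_eq_single (fun i => !z i)]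
  · simp
  · intro w _ hw
    have : ∃ i, ¬ (z i = !w i) := by
      by_contra h
      push_neg at h
      exact hw (funext fun i => by rw [h i, Bool.not_not])
    obtain ⟨i, hi⟩ := this
    rw [Finset.prod_eq_zero (Finset.mem_univ i) (by simp [hi]), zero_mul]
  · intro h
    exact absurd (Finset.mem_univ _) h

lemma steane_apply (b : Bool) (z : V7) :
    steane b z = if (fun i => xor (z i) b) ∈ hammingC then ((Real.sqrt 8 : ℂ))⁻¹ else 0 := by
  cases b
  · simp only [steane, if_neg (Bool.false_ne_true ∘ Eq.symm), Bool.xor_false]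
    rfl
  · have h : steane true z = (tensMat fun _ : Fin 7 => σx).mulVec
        (fun y => if y ∈ hammingC then ((Real.sqrt 8 : ℂ))⁻¹ else 0) z := rfl
    rw [h, tensMat_sigmax_mulVec]
    simp [Bool.xor_true]

/-- the linear parameterization of the concatenated classical code -/
def Lmap (t : Fin 3 → Bool) (s : Fin 7 → Fin 3 → Bool) : V49 :=
  fun q => xor (cw (s q.1) q.2) (cw t q.1)

/-- membership in the coset `b` of the concatenated classical code -/
def inCode (b : Bool) (y : V49) : Prop :=
  ∃ t s, y = fun q => xor (Lmap t s q) b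

lemma prod_ite_zero {ι : Type*} [Fintype ι] (p : ι → Prop) [∀ i, Decidable (p i)] (r : ℂ) :
    (∏ i, (if p i then r else 0)) = if ∀ i, p i then r ^ (Fintype.card ι) else 0 := by
  by_cases h : ∀ i, p i
  · rw [if_pos h]
    rw [Finset.prod_congr rfl (fun i _ => if_pos (h i))]
    simp [Finset.prod_const, Finset.card_univ]
  · rw [if_neg h]
    push_neg at h
    obtain ⟨i, hi⟩ := h
    exact Finset.prod_eq_zero (Finset.mem_univ i) (if_neg hi)

lemma steaneConcat_eq (b : Bool) (y : V49) :
    steaneConcat b y = if inCode b y then ((4096 : ℂ))⁻¹ else 0 := by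
  have r8 : ((Real.sqrt 8 : ℂ))⁻¹ ^ 8 = (4096 : ℂ)⁻¹ := by
    have hr8 : (Real.sqrt 8 : ℝ) ^ 8 = 4096 := by
      rw [show (8:ℕ) = 2*4 from rfl, pow_mul, Real.sq_sqrt (by norm_num)]
      norm_num
    rw [inv_pow]
    congr 1
    have h8 : (Real.sqrt 8 : ℂ) ^ 8 = ((Real.sqrt 8 ^ 8 : ℝ) : ℂ) := by push_cast; ring
    rw [h8, hr8]
    norm_num
  set r := ((Real.sqrt 8 : ℂ))⁻¹ with hr
  -- rewrite the summand
  have key : ∀ x : Fin 7 → Bool,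
      steane b x * ∏ m, steane (x m) (fun i => y (m, i)) =
      if ((fun m => xor (x m) b) ∈ hammingC ∧
          ∀ m, (fun i => xor (y (m, i)) (x m)) ∈ hammingC) then r ^ 8 else 0 := by
    intro x
    rw [steane_apply]
    rw [Finset.prod_congr rfl (fun m _ => steane_apply (x m) (fun i => y (m, i)))]
    rw [prod_ite_zero (fun m => (fun i => xor (y (m, i)) (x m)) ∈ hammingC) r]
    by_cases h1 : (fun m => xor (x m) b) ∈ hammingC
    · by_cases h2 : ∀ m, (fun i => xor (y (m, i)) (x m)) ∈ hammingC
      · rw [if_pos h1, if_pos h2, if_pos ⟨h1, h2⟩]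
        simp [Fintype.card_fin]
        ring
      · rw [if_neg h2, mul_zero, if_neg]
        exact fun hh => h2 hh.2
    · rw [if_neg h1, zero_mul, if_neg]
      exact fun hh => h1 hh.1
  unfold steaneConcat
  rw [Finset.sum_congr rfl (fun x _ => key x)]
  -- the predicate has at most one solution
  by_cases h : inCode b y
  · rw [if_pos h]
    obtain ⟨t, s, rfl⟩ := h
    set x0 : Fin 7 → Bool := fun m => xor (cw t m) b with hx0
    have hx0good : (fun m => xor (x0 m) b) ∈ hammingC ∧
        ∀ m, (fun i => xor ((fun q : Fin 7 × Fin 7 => xor (Lmap t s q) b) (m, i)) (x0 m)) ∈ hammingC := by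
      constructor
      · rw [mem_hammingC_iff]
        exact ⟨t, by funext m; simp [hx0, Bool.xor_assoc]⟩
      · intro m
        rw [mem_hammingC_iff]
        refine ⟨s m, funext fun i => ?_⟩
        simp only [hx0, Lmap]
        exact xor_cancel3 (cw (s m) i) (cw t m) b
    rw [Finset.sum_eq_single x0]
    · rw [if_pos hx0good, r8]
    · intro x _ hx
      rw [if_neg]
      rintro ⟨h1, h2⟩
      apply hx
      funext m
      by_contra hm
      -- x m = !(x0 m); derive contradiction
      obtain ⟨u, hu⟩ := (mem_hammingC_iff _).1 (h2 m)
      obtain ⟨u', hu'⟩ := (mem_hammingC_iff _).1 (hx0good.2 m)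
      have hxm : x m = !(x0 m) := by
        cases hxm : x m <;> cases hxm0 : x0 m <;> simp_all
      apply cw_ne_not_cw u u'
      funext i
      have e1 := congrFun hu i
      have e2 := congrFun hu' i
      simp only at e1 e2
      rw [← e1, ← e2, hxm]
      exact xor_not _ _
    · intro hni
      exact absurd (Finset.mem_univ _) hni
  · rw [if_neg h]
    apply Finset.sum_eq_zero
    intro x _
    rw [if_neg]
    rintro ⟨h1, h2⟩
    apply h
    obtain ⟨t, ht⟩ := (mem_hammingC_iff _).1 h1
    choose u hu using fun m => (mem_hammingC_iff _).1 (h2 m)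
    refine ⟨t, u, funext fun q => ?_⟩
    obtain ⟨m, i⟩ := q
    have e1 := congrFun ht m
    have e2 := congrFun (hu m) i
    simp only [Lmap]
    rw [← e2, ← e1]
    exact xor_reassemble _ _ _

end Stmt16Aux
namespace Stmt16Aux

lemma xor_swap4 : ∀ a b c d : Bool, xor (xor a b) (xor c d) = xor (xor a c) (xor b d) := by decide

/-- character `(-1)^{w·g}` restricted to supports -/
def sgn {ι : Type*} [Fintype ι] (w g : ι → Bool) : ℂ :=
  ∏ i, if w i && g i then -1 else 1

lemma sgn_xor {ι : Type*} [Fintype ι] (w w' g : ι → Bool) :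
    sgn (fun i => xor (w i) (w' i)) g = sgn w g * sgn w' g := by
  rw [sgn, sgn, sgn, ← Finset.prod_mul_distrib]
  refine Finset.prod_congr rfl fun i _ => ?_
  cases w i <;> cases w' i <;> cases g i <;> norm_num

lemma sgn_one_or {ι : Type*} [Fintype ι] (w g : ι → Bool) :
    sgn w g = 1 ∨ sgn w g = -1 := by
  refine Finset.prod_induction _ (fun x => x = 1 ∨ x = -1) ?_ (Or.inl rfl) ?_
  · rintro x y (rfl | rfl) (rfl | rfl) <;> norm_num
  · intro i _
    by_cases h : (w i && g i) = true
    · rw [if_pos h]; exact Or.inr rfl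
    · rw [if_neg h]; exact Or.inl rfl

lemma sgn_eq_pow {ι : Type*} [Fintype ι] (w g : ι → Bool) :
    sgn w g = (-1 : ℂ) ^ ((Finset.univ.filter fun i => (w i && g i) = true).card) := by
  rw [sgn, Finset.prod_ite _ _]
  simp [Finset.prod_const]

lemma sgn_eq_one_iff {ι : Type*} [Fintype ι] (w g : ι → Bool) :
    sgn w g = 1 ↔ (Finset.univ.filter fun i => (w i && g i) = true).card % 2 = 0 := by
  rw [sgn_eq_pow, ← Nat.even_iff]
  exact neg_one_pow_eq_one_iff_even (by norm_num)

lemma sgn_blocks (w g : V49) :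
    sgn w g = ∏ m, sgn (fun i => w (m, i)) (fun i => g (m, i)) := by
  rw [sgn, Fintype.prod_prod_type]
  rfl

lemma Lmap_xor (t t' : Fin 3 → Bool) (s s' : Fin 7 → Fin 3 → Bool) :
    (fun q => xor (Lmap t s q) (Lmap t' s' q)) =
      Lmap (fun k => xor (t k) (t' k)) (fun m k => xor (s m k) (s' m k)) := by
  funext q
  simp only [Lmap]
  rw [← congrFun (cw_xor (s q.1) (s' q.1)) q.2, ← congrFun (cw_xor t t') q.1]
  exact xor_swap4 _ _ _ _

lemma one_ne_Lmap (t : Fin 3 → Bool) (s : Fin 7 → Fin 3 → Bool) :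
    Lmap t s ≠ fun _ => true := by
  intro h
  have hm : ∃ m, cw t m = false := by
    by_contra hc
    push_neg at hc
    exact cw_ne_one t (funext fun m => by
      cases h' : cw t m
      · exact absurd h' (hc m)
      · rfl)
  obtain ⟨m, hm⟩ := hm
  apply cw_ne_one (s m)
  funext i
  have := congrFun h (m, i)
  simp only [Lmap] at this
  rw [hm] at this
  simpa using this

abbrev Upar := (Fin 3 → Bool) × (Fin 7 → Fin 3 → Bool)

def Phi (b : Bool) (u : Upar) : V49 := fun q => xor (Lmap u.1 u.2 q) b

lemma xor_right_cancel' : ∀ a c b : Bool, xor a b = xor c b → a = c := by decide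

lemma Phi_inj (b : Bool) : Function.Injective (Phi b) := by
  rintro ⟨t, s⟩ ⟨t', s'⟩ h
  have h' : Lmap t s = Lmap t' s' := by
    funext q
    exact xor_right_cancel' _ _ b (congrFun h q)
  have hms : ∀ m, s m = s' m ∧ cw t m = cw t' m := by
    intro m
    exact block_inj (s m) (s' m) (cw t m) (cw t' m)
      (funext fun i => congrFun h' (m, i))
  have ht : t = t' := cw_inj _ _ (funext fun m => (hms m).2)
  have hs : s = s' := funext fun m => (hms m).1
  rw [ht, hs]

lemma inCode_iff_mem_image (b : Bool) (y : V49) :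
    inCode b y ↔ y ∈ Finset.image (Phi b) Finset.univ := by
  rw [Finset.mem_image]
  constructor
  · rintro ⟨t, s, rfl⟩
    exact ⟨(t, s), Finset.mem_univ _, rfl⟩
  · rintro ⟨⟨t, s⟩, -, rfl⟩
    exact ⟨t, s, rfl⟩

lemma bool_shift : ∀ A b F B a : Bool,
    xor (xor A b) F = xor B a → F = xor (xor B A) (xor a b) := by decide

lemma bool_shift' : ∀ A b B a : Bool,
    xor (xor A b) (xor B (xor a b)) = xor (xor B A) a := by decide

lemma shift_iff (a b : Bool) (f : V49) (u : Upar) :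
    inCode a (fun q => xor (Phi b u q) (f q)) ↔
      (∃ t s, f = fun q => xor (Lmap t s q) (xor a b)) := by
  constructor
  · rintro ⟨t', s', h⟩
    refine ⟨fun k => xor (t' k) (u.1 k), fun m k => xor (s' m k) (u.2 m k),
      funext fun q => ?_⟩
    rw [← congrFun (Lmap_xor t' u.1 s' u.2) q]
    exact bool_shift _ _ _ _ _ (congrFun h q)
  · rintro ⟨t', s', rfl⟩
    refine ⟨fun k => xor (t' k) (u.1 k), fun m k => xor (s' m k) (u.2 m k),
      funext fun q => ?_⟩
    rw [← congrFun (Lmap_xor t' u.1 s' u.2) q]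
    exact (bool_shift' (Lmap u.1 u.2 q) b (Lmap t' s' q) a).symm ▸ rfl

lemma sum_sgn_L (g : V49) :
    ∑ u : Upar, sgn (Lmap u.1 u.2) g =
      if ∀ t s, sgn (Lmap t s) g = 1 then (16777216 : ℂ) else 0 := by
  by_cases hG : ∀ t s, sgn (Lmap t s) g = 1
  · rw [if_pos hG, Finset.sum_congr rfl fun u _ => hG u.1 u.2]
    simp only [Finset.sum_const, Finset.card_univ, nsmul_eq_mul, mul_one]
    norm_num [Fintype.card_prod, Fintype.card_pi, Fintype.card_fun]
  · rw [if_neg hG]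
    push_neg at hG
    obtain ⟨t0, s0, hne⟩ := hG
    have h0 : sgn (Lmap t0 s0) g = -1 := (sgn_one_or _ _).resolve_left hne
    set e : Upar → Upar :=
      fun u => (fun k => xor (u.1 k) (t0 k), fun m k => xor (u.2 m k) (s0 m k)) with he
    have hinv : Function.Involutive e := by
      rintro ⟨t, s⟩
      simp only [he, Prod.mk.injEq]
      constructor
      · funext k; simp [Bool.xor_assoc]
      · funext m k; simp [Bool.xor_assoc]
    have key : ∑ u : Upar, sgn (Lmap u.1 u.2) g =
        ∑ u : Upar, sgn (Lmap u.1 u.2) g * (-1) := by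
      calc ∑ u : Upar, sgn (Lmap u.1 u.2) g
          = ∑ u : Upar, sgn (Lmap (e u).1 (e u).2) g :=
            (Fintype.sum_bijective e hinv.bijective _ _ fun u => rfl).symm
        _ = ∑ u : Upar, sgn (Lmap u.1 u.2) g * (-1) := by
            refine Finset.sum_congr rfl fun u _ => ?_
            have : Lmap (e u).1 (e u).2 = fun q => xor (Lmap u.1 u.2 q) (Lmap t0 s0 q) :=
              (Lmap_xor u.1 t0 u.2 s0).symm
            rw [this, sgn_xor, h0]
    have h2 : (2 : ℂ) * (∑ u : Upar, sgn (Lmap u.1 u.2) g) = 0 := by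
      rw [← Finset.sum_mul] at key
      linear_combination key
    have := mul_eq_zero.mp h2
    simpa using this

lemma master (f g : V49) (K : ℂ) (M : Matrix V49 V49 ℂ)
    (hM : ∀ z w, M z w = K * ((if z = fun q => xor (w q) (f q) then 1 else 0) * sgn w g))
    (a b : Bool) :
    ∑ z, ∑ w, steaneConcat a z * M z w * steaneConcat b w =
      K * ((if ∃ t s, f = fun q => xor (Lmap t s q) (xor a b) then 1 else 0) *
        (sgn (fun _ => b) g * (if ∀ t s, sgn (Lmap t s) g = 1 then 1 else 0))) := by
  set r : ℂ := (4096 : ℂ)⁻¹ with hr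
  rw [Finset.sum_comm]
  have hz : ∀ w, ∑ z, steaneConcat a z * M z w * steaneConcat b w =
      steaneConcat a (fun q => xor (w q) (f q)) * (K * sgn w g) * steaneConcat b w := by
    intro w
    rw [Finset.sum_eq_single (fun q => xor (w q) (f q))]
    · rw [hM, if_pos rfl]; ring
    · intro z _ hzz
      rw [hM, if_neg hzz]; ring
    · intro h; exact absurd (Finset.mem_univ _) h
  rw [Finset.sum_congr rfl fun w _ => hz w]
  have hsummand : ∀ w, steaneConcat a (fun q => xor (w q) (f q)) * (K * sgn w g) *
      steaneConcat b w =
      if inCode b w then steaneConcat a (fun q => xor (w q) (f q)) * (K * sgn w g) * r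
      else 0 := by
    intro w
    rw [steaneConcat_eq b w]
    split_ifs with h
    · rfl
    · rw [mul_zero]
  rw [Finset.sum_congr rfl fun w _ => hsummand w, ← Finset.sum_filter]
  have himg : Finset.univ.filter (fun w => inCode b w) = Finset.image (Phi b) Finset.univ := by
    ext w
    rw [Finset.mem_filter]
    constructor
    · rintro ⟨-, h⟩; exact (inCode_iff_mem_image b w).1 h
    · intro h; exact ⟨Finset.mem_univ _, (inCode_iff_mem_image b w).2 h⟩
  rw [himg, Finset.sum_image (fun x _ y _ h => Phi_inj b h)]
  have hterm : ∀ u : Upar,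
      steaneConcat a (fun q => xor (Phi b u q) (f q)) * (K * sgn (Phi b u) g) * r =
      ((if ∃ t s, f = fun q => xor (Lmap t s q) (xor a b) then r else 0) *
        (K * (sgn (fun _ => b) g * r))) * sgn (Lmap u.1 u.2) g := by
    intro u
    rw [steaneConcat_eq]
    rw [if_congr (shift_iff a b f u) rfl rfl]
    have hphi : sgn (Phi b u) g = sgn (Lmap u.1 u.2) g * sgn (fun _ => b) g := by
      have : Phi b u = fun q => xor (Lmap u.1 u.2 q) ((fun _ : Fin 7 × Fin 7 => b) q) := rfl
      rw [this, sgn_xor]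
    rw [hphi]
    ring
  rw [Finset.sum_congr rfl fun u _ => hterm u, ← Finset.mul_sum, sum_sgn_L]
  have hrN : r * r * (16777216 : ℂ) = 1 := by
    rw [hr]; norm_num
  split_ifs
  · linear_combination (K * sgn (fun _ : Fin 7 × Fin 7 => b) g) * hrN
  all_goals ring

end Stmt16Aux
namespace Stmt16Aux

lemma one_ne_sx : (1 : Matrix Bool Bool ℂ) ≠ σx := by
  intro h
  have h2 := congrFun (congrFun h false) false
  simp [σx, Matrix.one_apply] at h2

lemma one_ne_sy : (1 : Matrix Bool Bool ℂ) ≠ σy := by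
  intro h
  have h2 := congrFun (congrFun h false) false
  simp [σy, Matrix.one_apply] at h2

lemma one_ne_sz : (1 : Matrix Bool Bool ℂ) ≠ σz := by
  intro h
  have h2 := congrFun (congrFun h true) true
  simp [σz, Matrix.one_apply] at h2
  norm_num at h2

lemma sx_ne_one : σx ≠ (1 : Matrix Bool Bool ℂ) := fun h => one_ne_sx h.symm
lemma sy_ne_one : σy ≠ (1 : Matrix Bool Bool ℂ) := fun h => one_ne_sy h.symm
lemma sz_ne_one : σz ≠ (1 : Matrix Bool Bool ℂ) := fun h => one_ne_sz h.symm

lemma sx_ne_sy : σx ≠ σy := by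
  intro h
  have h2 := congrFun (congrFun h false) true
  simp [σx, σy] at h2
  rw [Complex.ext_iff] at h2
  simp at h2

lemma sx_ne_sz : σx ≠ σz := by
  intro h
  have h2 := congrFun (congrFun h false) false
  simp [σx, σz] at h2

lemma sz_ne_sx : σz ≠ σx := fun h => sx_ne_sz h.symm

lemma sz_ne_sy : σz ≠ σy := by
  intro h
  have h2 := congrFun (congrFun h false) false
  simp [σz, σy] at h2

def fOf (p : PauliOp (Fin 7 × Fin 7)) : V49 :=
  fun q => if p.fac q = σx ∨ p.fac q = σy then true else false

def gOf (p : PauliOp (Fin 7 × Fin 7)) : V49 :=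
  fun q => if p.fac q = σz ∨ p.fac q = σy then true else false

def KOf (p : PauliOp (Fin 7 × Fin 7)) : ℂ :=
  Complex.I ^ (p.phase : ℕ) * ∏ q, (if p.fac q = σy then Complex.I else 1)

lemma fac_entry (p : PauliOp (Fin 7 × Fin 7)) (q : Fin 7 × Fin 7) (y x : Bool) :
    p.fac q y x =
      (if p.fac q = σy then Complex.I else 1) *
        ((if y = xor x (fOf p q) then 1 else 0) * (if x && gOf p q then -1 else 1)) := by
  rcases p.isPauli q with h | h | h | h
  · have hf : fOf p q = false := by simp [fOf, h, one_ne_sx, one_ne_sy]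
    have hg : gOf p q = false := by simp [gOf, h, one_ne_sz, one_ne_sy]
    rw [h, hf, hg, if_neg (fun hh : (1 : Matrix Bool Bool ℂ) = σy => one_ne_sy hh)]
    cases y <;> cases x <;> simp [Matrix.one_apply]
  · have hf : fOf p q = true := by simp [fOf, h]
    have hg : gOf p q = false := by simp [gOf, h, sx_ne_sz, sx_ne_sy]
    rw [h, hf, hg, if_neg (fun hh : σx = σy => sx_ne_sy hh)]
    cases y <;> cases x <;> simp [σx]
  · have hf : fOf p q = true := by simp [fOf, h]
    have hg : gOf p q = true := by simp [gOf, h]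
    rw [h, hf, hg, if_pos rfl]
    cases y <;> cases x <;> simp [σy]
  · have hf : fOf p q = false := by
      simp [fOf, h, sz_ne_sx, sz_ne_sy]
    have hg : gOf p q = true := by simp [gOf, h]
    rw [h, hf, hg, if_neg (fun hh : σz = σy => sz_ne_sy hh)]
    cases y <;> cases x <;> simp [σz]

lemma toMatrix_entry (p : PauliOp (Fin 7 × Fin 7)) (z w : V49) :
    p.toMatrix z w =
      KOf p * ((if z = fun q => xor (w q) (fOf p q) then 1 else 0) * sgn w (gOf p)) := by
  unfold PauliOp.toMatrix tensMat KOf sgn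
  simp only [Matrix.smul_apply, Matrix.of_apply, smul_eq_mul]
  rw [Finset.prod_congr rfl fun q _ => fac_entry p q (z q) (w q),
    Finset.prod_mul_distrib, Finset.prod_mul_distrib, Finset.prod_boole]
  have hcond : (∀ q ∈ Finset.univ, z q = xor (w q) (fOf p q)) ↔
      z = fun q => xor (w q) (fOf p q) := by
    rw [funext_iff]; simp
  simp only [hcond]
  ring

lemma weight_eq (p : PauliOp (Fin 7 × Fin 7)) :
    p.weight = (Finset.univ.filter fun q => p.fac q ≠ 1).card := by
  have h : {q | p.fac q ≠ 1} = ↑(Finset.univ.filter fun q => p.fac q ≠ 1) := by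
    ext q; simp
  rw [PauliOp.weight, h, Set.ncard_coe_finset]

lemma wt_f_le (p : PauliOp (Fin 7 × Fin 7)) :
    (Finset.univ.filter fun q => fOf p q = true).card ≤ p.weight := by
  rw [weight_eq]
  apply Finset.card_le_card
  intro q hq
  rw [Finset.mem_filter] at hq ⊢
  refine ⟨hq.1, ?_⟩
  have h2 := hq.2
  unfold fOf at h2
  split_ifs at h2 with hA
  · rcases hA with h | h <;> rw [h]
    · exact sx_ne_one
    · exact sy_ne_one

lemma wt_g_le (p : PauliOp (Fin 7 × Fin 7)) :
    (Finset.univ.filter fun q => gOf p q = true).card ≤ p.weight := by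
  rw [weight_eq]
  apply Finset.card_le_card
  intro q hq
  rw [Finset.mem_filter] at hq ⊢
  refine ⟨hq.1, ?_⟩
  have h2 := hq.2
  unfold gOf at h2
  split_ifs at h2 with hA
  · rcases hA with h | h <;> rw [h]
    · exact sz_ne_one
    · exact sy_ne_one

end Stmt16Aux
namespace Stmt16Aux

lemma cw_false_card : ∀ t : Fin 3 → Bool,
    3 ≤ (Finset.univ.filter fun m => cw t m = false).card := by decide

lemma card_filter_prod (h : V49) :
    (Finset.univ.filter fun q => h q = true).card = ∑ m, wt7 (fun i => h (m, i)) := by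
  rw [Finset.card_filter, Fintype.sum_prod_type]
  exact Finset.sum_congr rfl fun m _ => (Finset.card_filter _ _).symm

/-- distance fact (i): every element of the nontrivial coset has weight ≥ 9 -/
lemma nine_le_wt_coset (t : Fin 3 → Bool) (s : Fin 7 → Fin 3 → Bool) :
    9 ≤ (Finset.univ.filter fun q => (xor (Lmap t s q) true) = true).card := by
  rw [card_filter_prod]
  have hblock : ∀ m, cw t m = false →
      3 ≤ wt7 (fun i => xor (Lmap t s (m, i)) true) := by
    intro m hm
    have he : (fun i => xor (Lmap t s (m, i)) true) = fun i => !(cw (s m) i) := by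
      funext i
      simp [Lmap, hm, Bool.xor_false, Bool.xor_true]
    have hfilter : (Finset.univ.filter fun i => (xor (Lmap t s (m, i)) true) = true) =
        (Finset.univ.filter fun i => (!(cw (s m) i)) = true) :=
      Finset.filter_congr fun i _ => by rw [congrFun he i]
    show 3 ≤ (Finset.univ.filter fun i => (xor (Lmap t s (m, i)) true) = true).card
    rw [hfilter]
    exact not_cw_wt (s m)
  calc (9 : ℕ) = (3 : ℕ) * 3 := rfl
    _ ≤ (Finset.univ.filter fun m => cw t m = false).card * 3 :=
        Nat.mul_le_mul_right 3 (cw_false_card t)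
    _ ≤ ∑ m ∈ Finset.univ.filter (fun m => cw t m = false),
          wt7 (fun i => xor (Lmap t s (m, i)) true) := by
        rw [← smul_eq_mul]
        exact Finset.card_nsmul_le_sum _ _ 3
          (fun m hm => hblock m (Finset.mem_filter.mp hm).2)
    _ ≤ ∑ m, wt7 (fun i => xor (Lmap t s (m, i)) true) :=
        Finset.sum_le_sum_of_subset (Finset.filter_subset _ _)

lemma sgn_false_left {ι : Type*} [Fintype ι] (g : ι → Bool) :
    sgn (fun _ => false) g = 1 := by simp [sgn]

lemma sgn_const (c : Bool) (w : V7) :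
    sgn (fun _ => c) w = if (c && decide (wt7 w % 2 = 1)) then -1 else 1 := by
  cases c
  · simp [sgn]
  · rw [sgn_eq_pow]
    have : (Finset.univ.filter fun i => (true && w i) = true) =
        (Finset.univ.filter fun i => w i = true) := by
      apply Finset.filter_congr; intro i _; simp
    rw [this]
    by_cases hp : wt7 w % 2 = 1
    · rw [if_pos (by simp [hp])]
      exact Odd.neg_one_pow (Nat.odd_iff.mpr hp)
    · rw [if_neg (by simp [hp])]
      refine Even.neg_one_pow (Nat.even_iff.mpr ?_)
      rcases Nat.mod_two_eq_zero_or_one (wt7 w) with h | h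
      · exact h
      · exact absurd h hp

/-- distance fact (ii): a vector orthogonal to the concatenated code of weight ≤ 8
has even weight -/
lemma even_g (g : V49)
    (hG : ∀ t s, sgn (Lmap t s) g = 1)
    (hwt : (Finset.univ.filter fun q => g q = true).card ≤ 8) :
    sgn (fun _ => true) g = 1 := by
  set pp : V7 := fun m => decide (wt7 (fun i => g (m, i)) % 2 = 1) with hpp
  -- per-block dual conditions
  have h1 : ∀ (m : Fin 7) (u : Fin 3 → Bool),
      sgn (fun i => cw u i) (fun i => g (m, i)) = 1 := by
    intro m u
    set s : Fin 7 → Fin 3 → Bool := fun m' => if m' = m then u else fun _ => false with hs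
    have hL : sgn (Lmap (fun _ => false) s) g = sgn (fun i => cw u i) (fun i => g (m, i)) := by
      rw [sgn_blocks]
      rw [Finset.prod_eq_single m]
      · congr 1
        funext i
        simp [Lmap, hs, congrFun cw_zero]
      · intro m' _ hne
        have hb : (fun i => Lmap (fun _ => false) s (m', i)) = fun _ => false := by
          funext i
          simp [Lmap, hs, hne, congrFun cw_zero]
        rw [hb]
        exact sgn_false_left _
      · intro h; exact absurd (Finset.mem_univ _) h
    rw [← hL]
    exact hG _ _
  -- pattern dual conditions
  have h2 : ∀ t : Fin 3 → Bool, sgn (fun m => cw t m) pp = 1 := by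
    intro t
    have hL : sgn (Lmap t (fun _ _ => false)) g = sgn (fun m => cw t m) pp := by
      rw [sgn_blocks, sgn]
      refine Finset.prod_congr rfl fun m _ => ?_
      have hb : (fun i => Lmap t (fun _ _ => false) (m, i)) = fun _ => cw t m := by
        funext i
        simp [Lmap, congrFun cw_zero]
      rw [hb, sgn_const]
    rw [← hL]
    exact hG _ _
  -- total weight parity
  rw [sgn_eq_one_iff]
  have hsimp : (Finset.univ.filter fun q : Fin 7 × Fin 7 => (true && g q) = true) =
      (Finset.univ.filter fun q => g q = true) := by
    apply Finset.filter_congr; intro q _; simp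
  rw [hsimp]
  by_contra hodd
  -- pp has odd weight
  have hW : (Finset.univ.filter fun q => g q = true).card % 2 = 1 := by
    rcases Nat.mod_two_eq_zero_or_one ((Finset.univ.filter fun q => g q = true).card) with h | h
    · exact absurd h hodd
    · exact h
  have hppodd : wt7 pp % 2 = 1 := by
    have e1 : (Finset.univ.filter fun q => g q = true).card % 2
        = (∑ m, wt7 (fun i => g (m, i)) % 2) % 2 := by
      rw [card_filter_prod, Finset.sum_nat_mod]
    have e2 : (∑ m, wt7 (fun i => g (m, i)) % 2) = wt7 pp := by
      rw [wt7, Finset.card_filter]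
      refine Finset.sum_congr rfl fun m _ => ?_
      by_cases hm : wt7 (fun i => g (m, i)) % 2 = 1
      · rw [hm, if_pos (by simp [hpp, hm])]
      · rcases Nat.mod_two_eq_zero_or_one (wt7 (fun i => g (m, i))) with h | h
        · rw [h, if_neg (by simp [hpp, h])]
        · exact absurd h hm
    have e3 : wt7 pp % 2 = 1 := by
      rw [← e2, ← e1, hW]
    exact e3
  -- pp satisfies dual conditions
  have hppdual : ∀ t : Fin 3 → Bool,
      (Finset.univ.filter fun i => (cw t i && pp i) = true).card % 2 = 0 :=
    fun t => (sgn_eq_one_iff _ _).mp (h2 t)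
  have hpp3 : 3 ≤ wt7 pp := odd_dual_wt pp hppdual hppodd
  -- each odd block has weight ≥ 3
  have hblock3 : ∀ m, pp m = true → 3 ≤ wt7 (fun i => g (m, i)) := by
    intro m hm
    refine odd_dual_wt _ (fun u => (sgn_eq_one_iff _ _).mp (h1 m u)) ?_
    exact of_decide_eq_true hm
  -- total weight ≥ 9, contradiction
  have : 9 ≤ (Finset.univ.filter fun q => g q = true).card := by
    rw [card_filter_prod]
    calc (9 : ℕ) = (3 : ℕ) * 3 := rfl
      _ ≤ wt7 pp * 3 := Nat.mul_le_mul_right 3 hpp3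
      _ ≤ ∑ m ∈ Finset.univ.filter (fun m => pp m = true),
            wt7 (fun i => g (m, i)) := by
          rw [← smul_eq_mul]
          exact Finset.card_nsmul_le_sum _ _ 3
            (fun m hm => hblock3 m (Finset.mem_filter.mp hm).2)
      _ ≤ ∑ m, wt7 (fun i => g (m, i)) :=
          Finset.sum_le_sum_of_subset (Finset.filter_subset _ _)
  omega

end Stmt16Aux
namespace Stmt16Aux

lemma sgn_false_right {ι : Type*} [Fintype ι] (w : ι → Bool) :
    sgn w (fun _ => false) = 1 := by simp [sgn]

lemma Lmap_zero : Lmap (fun _ => false) (fun _ _ => false) = fun _ => false := by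
  funext q; simp [Lmap, congrFun cw_zero]

lemma hM1 : ∀ z w : V49, (1 : Matrix V49 V49 ℂ) z w =
    1 * ((if z = fun q => xor (w q) ((fun _ : Fin 7 × Fin 7 => false) q) then 1 else 0) *
      sgn w (fun _ => false)) := by
  intro z w
  simp [Matrix.one_apply, sgn_false_right, Bool.xor_false]

lemma ortho (a b : Bool) :
    ∑ w, steaneConcat a w * steaneConcat b w = if a = b then 1 else 0 := by
  have h := master (fun _ => false) (fun _ => false) 1 1 hM1 a b
  have inner : ∀ z, ∑ w, steaneConcat a z * (1 : Matrix V49 V49 ℂ) z w * steaneConcat b w =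
      steaneConcat a z * steaneConcat b z := by
    intro z
    rw [Finset.sum_eq_single z]
    · rw [Matrix.one_apply_eq]; ring
    · intro w _ hne
      rw [Matrix.one_apply_ne' hne]; ring
    · intro hni; exact absurd (Finset.mem_univ _) hni
  rw [Finset.sum_congr rfl fun z _ => inner z] at h
  rw [h]
  rw [if_pos (fun t s => sgn_false_right (Lmap t s)), sgn_false_right]
  by_cases hab : a = b
  · subst hab
    rw [if_pos ⟨fun _ => false, fun _ _ => false, by
      funext q
      simp [congrFun Lmap_zero q]⟩, if_pos rfl]
    norm_num
  · rw [if_neg, if_neg hab]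
    · norm_num
    · rintro ⟨t, s, hfs⟩
      apply one_ne_Lmap t s
      funext q
      have h2 : false = xor (Lmap t s q) (xor a b) := congrFun hfs q
      have hx : xor a b = true := by
        cases a <;> cases b <;> (try rfl) <;> exact absurd rfl hab
      rw [hx] at h2
      cases h3 : Lmap t s q
      · rw [h3] at h2; cases h2
      · rfl

def Qproj : Matrix V49 V49 ℂ :=
  Matrix.of fun y x => steaneConcat false y * steaneConcat false x +
    steaneConcat true y * steaneConcat true x

lemma steaneConcat_real (b : Bool) (y : V49) :
    (starRingEnd ℂ) (steaneConcat b y) = steaneConcat b y := by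
  rw [steaneConcat_eq]
  split_ifs <;> simp [map_inv₀, map_ofNat]

lemma Qproj_herm : Qprojᴴ = Qproj := by
  apply Matrix.ext
  intro i j
  simp only [Matrix.conjTranspose_apply, Qproj, Matrix.of_apply, star_add, star_mul',
    RCLike.star_def]
  rw [steaneConcat_real, steaneConcat_real, steaneConcat_real, steaneConcat_real]
  ring

lemma Qproj_mulVec (u : V49 → ℂ) : Qproj.mulVec u =
    (∑ x, steaneConcat false x * u x) • steaneConcat false +
    (∑ x, steaneConcat true x * u x) • steaneConcat true := by
  funext y
  simp only [Matrix.mulVec, dotProduct, Qproj, Matrix.of_apply, Pi.add_apply,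
    Pi.smul_apply, smul_eq_mul, add_mul]
  rw [Finset.sum_add_distrib]
  simp only [mul_assoc]
  rw [← Finset.mul_sum, ← Finset.mul_sum, Finset.mul_sum, Finset.mul_sum]
  rw [← Finset.mul_sum, ← Finset.mul_sum]
  ring

lemma mem_span_steane (b : Bool) :
    steaneConcat b ∈ Submodule.span ℂ {steaneConcat false, steaneConcat true} := by
  apply Submodule.subset_span
  cases b
  · exact Set.mem_insert _ _
  · exact Set.mem_insert_of_mem _ rfl

lemma Qproj_fix_basis (b : Bool) :
    Qproj.mulVec (steaneConcat b) = steaneConcat b := by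
  rw [Qproj_mulVec, ortho, ortho]
  cases b
  · simp
  · simp

lemma Qproj_fix (u : V49 → ℂ)
    (hu : u ∈ Submodule.span ℂ {steaneConcat false, steaneConcat true}) :
    Qproj.mulVec u = u := by
  rw [Submodule.mem_span_pair] at hu
  obtain ⟨c, d, rfl⟩ := hu
  rw [Matrix.mulVec_add, Matrix.mulVec_smul, Matrix.mulVec_smul,
    Qproj_fix_basis, Qproj_fix_basis]

lemma Pm_eq_Qproj (Pm : Matrix V49 V49 ℂ)
    (hrange : ∀ u, Pm.mulVec u ∈ Submodule.span ℂ {steaneConcat false, steaneConcat true})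
    (hfix : ∀ u ∈ Submodule.span ℂ {steaneConcat false, steaneConcat true}, Pm.mulVec u = u)
    (hherm : Pmᴴ = Pm) : Pm = Qproj := by
  have hPQ : Pm * Qproj = Qproj := by
    apply Matrix.ext
    intro i j
    have hcol : (fun k => Qproj k j) =
        steaneConcat false j • steaneConcat false + steaneConcat true j • steaneConcat true := by
      funext k
      simp only [Qproj, Matrix.of_apply, Pi.add_apply, Pi.smul_apply, smul_eq_mul]
      ring
    have h1 : (Pm * Qproj) i j = Pm.mulVec (fun k => Qproj k j) i := rfl
    rw [h1, hcol, hfix _ (Submodule.add_mem _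
      (Submodule.smul_mem _ _ (mem_span_steane false))
      (Submodule.smul_mem _ _ (mem_span_steane true)))]
    simp only [Qproj, Matrix.of_apply, Pi.add_apply, Pi.smul_apply, smul_eq_mul]
    ring
  have hQP : Qproj * Pm = Pm := by
    apply Matrix.ext
    intro i j
    have h1 : (Qproj * Pm) i j = Qproj.mulVec (fun k => Pm k j) i := rfl
    have hcol : (fun k => Pm k j) = Pm.mulVec (bvec j) := by
      funext k
      simp only [Matrix.mulVec, dotProduct, bvec, mul_ite, mul_one, mul_zero]
      rw [Finset.sum_ite_eq' Finset.univ j (fun l => Pm k l)]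
      simp
    rw [h1, hcol, Qproj_fix _ (hrange (bvec j))]
    exact (congrFun hcol i).symm
  have h2 := congrArg Matrix.conjTranspose hQP
  rw [Matrix.conjTranspose_mul, hherm, Qproj_herm] at h2
  rw [← h2, hPQ]

lemma QMQ_apply (M : Matrix V49 V49 ℂ) (y x : V49) :
    (Qproj * M * Qproj) y x =
      (∑ z, ∑ w, steaneConcat false z * M z w * steaneConcat false w) *
        (steaneConcat false y * steaneConcat false x) +
      (∑ z, ∑ w, steaneConcat false z * M z w * steaneConcat true w) *
        (steaneConcat false y * steaneConcat true x) +
      (∑ z, ∑ w, steaneConcat true z * M z w * steaneConcat false w) *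
        (steaneConcat true y * steaneConcat false x) +
      (∑ z, ∑ w, steaneConcat true z * M z w * steaneConcat true w) *
        (steaneConcat true y * steaneConcat true x) := by
  have hL : (Qproj * M * Qproj) y x = ∑ w, ∑ z, Qproj y z * M z w * Qproj w x := by
    rw [Matrix.mul_apply]
    refine Finset.sum_congr rfl fun w _ => ?_
    rw [Matrix.mul_apply, Finset.sum_mul]
  rw [hL, Finset.sum_comm]
  rw [Finset.sum_mul, Finset.sum_mul, Finset.sum_mul, Finset.sum_mul,
    ← Finset.sum_add_distrib, ← Finset.sum_add_distrib, ← Finset.sum_add_distrib]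
  refine Finset.sum_congr rfl fun z _ => ?_
  rw [Finset.sum_mul, Finset.sum_mul, Finset.sum_mul, Finset.sum_mul,
    ← Finset.sum_add_distrib, ← Finset.sum_add_distrib, ← Finset.sum_add_distrib]
  refine Finset.sum_congr rfl fun w _ => ?_
  simp only [Qproj, Matrix.of_apply]
  ring

end Stmt16Aux
namespace Stmt16Aux

lemma main_le8 (p : PauliOp (Fin 7 × Fin 7)) (hw : p.weight ≤ 8) :
    ∃ c : ℂ, Qproj * p.toMatrix * Qproj = c • Qproj := by
  have hmaster := master (fOf p) (gOf p) (KOf p) p.toMatrix (toMatrix_entry p)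
  by_cases hG : ∀ t s, sgn (Lmap t s) (gOf p) = 1
  · -- all stabilizer conditions hold
    have hoff : ∀ a b : Bool, xor a b = true →
        (∑ z, ∑ w, steaneConcat a z * p.toMatrix z w * steaneConcat b w) = 0 := by
      intro a b hab
      rw [hmaster a b, hab]
      have hE : ¬ ∃ t s, fOf p = fun q => xor (Lmap t s q) true := by
        rintro ⟨t, s, hfs⟩
        have h9 : 9 ≤ (Finset.univ.filter fun q => fOf p q = true).card := by
          have h9' := nine_le_wt_coset t s
          have hfilter : (Finset.univ.filter fun q => fOf p q = true) =
              (Finset.univ.filter fun q => (xor (Lmap t s q) true) = true) := by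
            apply Finset.filter_congr
            intro q _
            rw [congrFun hfs q]
          rw [hfilter]
          exact h9'
        have hle := wt_f_le p
        omega
      rw [if_neg hE]
      ring
    have hg1 : sgn (fun _ : Fin 7 × Fin 7 => true) (gOf p) = 1 :=
      even_g _ hG (le_trans (wt_g_le p) hw)
    refine ⟨KOf p * (if ∃ t s, fOf p = fun q => xor (Lmap t s q) false then 1 else 0), ?_⟩
    have hd : ∀ a : Bool,
        (∑ z, ∑ w, steaneConcat a z * p.toMatrix z w * steaneConcat a w) =
        KOf p * (if ∃ t s, fOf p = fun q => xor (Lmap t s q) false then 1 else 0) := by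
      intro a
      rw [hmaster a a, Bool.xor_self, if_pos hG]
      cases a
      · rw [sgn_false_left]
        ring
      · rw [hg1]
        ring
    apply Matrix.ext
    intro y x
    rw [QMQ_apply, hd false, hd true, hoff false true rfl, hoff true false rfl]
    simp only [Matrix.smul_apply, Qproj, Matrix.of_apply, smul_eq_mul]
    ring
  · -- a stabilizer condition fails: everything vanishes
    refine ⟨0, ?_⟩
    apply Matrix.ext
    intro y x
    rw [QMQ_apply]
    have hz : ∀ a b : Bool,
        (∑ z, ∑ w, steaneConcat a z * p.toMatrix z w * steaneConcat b w) = 0 := by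
      intro a b
      rw [hmaster a b, if_neg hG]
      ring
    rw [hz, hz, hz, hz]
    simp

/-- support of the weight-9 logical operator -/
def gT : V49 := fun q => decide (q.1.val ≤ 2) && decide (q.2.val ≤ 2)

/-- the weight-9 Pauli operator Z^{⊗T×T} -/
def qq : PauliOp (Fin 7 × Fin 7) where
  phase := 0
  fac := fun q => if gT q then σz else 1
  isPauli := fun q => by
    by_cases h : gT q = true
    · exact Or.inr (Or.inr (Or.inr (if_pos h)))
    · exact Or.inl (if_neg h)

lemma qq_fac : qq.fac = fun q => if gT q then σz else 1 := rfl

lemma qq_fac_pos {q : Fin 7 × Fin 7} (h : gT q = true) : qq.fac q = σz := by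
  rw [qq_fac]; exact if_pos h

lemma qq_fac_neg {q : Fin 7 × Fin 7} (h : ¬ gT q = true) : qq.fac q = 1 := by
  rw [qq_fac]; exact if_neg h

lemma qq_weight : qq.weight = 9 := by
  rw [weight_eq]
  have hfilter : (Finset.univ.filter fun q => qq.fac q ≠ 1) =
      (Finset.univ.filter fun q => gT q = true) := by
    apply Finset.filter_congr
    intro q _
    by_cases h : gT q = true
    · simp [qq_fac_pos h, sz_ne_one, h]
    · simp [qq_fac_neg h, h]
  rw [hfilter]
  decide

lemma qq_fOf : fOf qq = fun _ => false := by
  funext q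
  by_cases h : gT q = true
  · simp [fOf, qq_fac_pos h, sz_ne_sx, sz_ne_sy]
  · simp [fOf, qq_fac_neg h, one_ne_sx, one_ne_sy]

lemma qq_gOf : gOf qq = gT := by
  funext q
  by_cases h : gT q = true
  · simp [gOf, qq_fac_pos h, h]
  · simp only [gOf, qq_fac_neg h]
    rw [if_neg]
    · cases hg : gT q
      · rfl
      · exact absurd hg h
    · rintro (h1 | h1)
      · exact one_ne_sz h1
      · exact one_ne_sy h1

lemma qq_K : KOf qq = 1 := by
  unfold KOf
  have h0 : (qq.phase : ℕ) = 0 := rfl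
  rw [h0, pow_zero, one_mul]
  apply Finset.prod_eq_one
  intro q _
  rw [if_neg]
  by_cases h : gT q = true
  · rw [qq_fac_pos h]; exact sz_ne_sy
  · rw [qq_fac_neg h]; exact one_ne_sy

lemma factB : ∀ t : Fin 3 → Bool,
    (Finset.univ.filter fun m : Fin 7 => ((cw t m) && decide (m.val ≤ 2)) = true).card % 2
      = 0 := by decide

lemma factC : ∀ (u : Fin 3 → Bool) (c : Bool),
    (Finset.univ.filter fun i : Fin 7 =>
      ((xor (cw u i) c) && decide (i.val ≤ 2)) = true).card % 2 = if c then 1 else 0 := by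
  decide

lemma blk (u : Fin 3 → Bool) (c : Bool) :
    sgn (fun i : Fin 7 => xor (cw u i) c) (fun i => decide (i.val ≤ 2)) =
      if c then -1 else 1 := by
  rw [sgn_eq_pow]
  cases c
  · refine Even.neg_one_pow (Nat.even_iff.mpr ?_)
    simpa using factC u false
  · refine Odd.neg_one_pow (Nat.odd_iff.mpr ?_)
    simpa using factC u true

lemma qq_Gperp : ∀ t s, sgn (Lmap t s) gT = 1 := by
  intro t s
  rw [sgn_blocks]
  have hfac : ∀ m : Fin 7, sgn (fun i => Lmap t s (m, i)) (fun i => gT (m, i)) =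
      if ((cw t m) && decide (m.val ≤ 2)) = true then (-1 : ℂ) else 1 := by
    intro m
    by_cases hm : m.val ≤ 2
    · have hgm : (fun i => gT (m, i)) = fun i : Fin 7 => decide (i.val ≤ 2) := by
        funext i; simp [gT, hm]
      have hbm : (fun i => Lmap t s (m, i)) = fun i => xor (cw (s m) i) (cw t m) := rfl
      rw [hgm, hbm, blk (s m) (cw t m)]
      cases h : cw t m <;> simp [hm]
    · have hgm : (fun i => gT (m, i)) = fun _ => false := by
        funext i; simp [gT, hm]
      rw [hgm, sgn_false_right]
      have : decide (m.val ≤ 2) = false := by simp [hm]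
      rw [this, Bool.and_false]
      simp
  rw [Finset.prod_congr rfl fun m _ => hfac m]
  have hsgn : ∏ m, (if ((cw t m) && decide (m.val ≤ 2)) = true then (-1 : ℂ) else 1) =
      sgn (fun m => cw t m) (fun m : Fin 7 => decide (m.val ≤ 2)) := rfl
  rw [hsgn, sgn_eq_one_iff]
  exact factB t

lemma card_gT : (Finset.univ.filter fun q : Fin 7 × Fin 7 =>
    (true && gT q) = true).card = 9 := by decide

lemma sgn_one_gT : sgn (fun _ : Fin 7 × Fin 7 => true) gT = -1 := by
  rw [sgn_eq_pow, card_gT]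
  norm_num

lemma not_coset_zero : ¬ ∃ t s,
    (fun _ : Fin 7 × Fin 7 => false) = fun q => xor (Lmap t s q) true := by
  rintro ⟨t, s, h⟩
  apply one_ne_Lmap t s
  funext q
  have h2 : false = xor (Lmap t s q) true := congrFun h q
  cases h3 : Lmap t s q
  · rw [h3] at h2; cases h2
  · rfl

lemma inCode_zero : ∃ t s,
    (fun _ : Fin 7 × Fin 7 => false) = fun q => xor (Lmap t s q) false :=
  ⟨fun _ => false, fun _ _ => false, by funext q; simp [congrFun Lmap_zero q]⟩

lemma inCode00 : inCode false (fun _ : Fin 7 × Fin 7 => false) := inCode_zero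

lemma not_inCode10 : ¬ inCode true (fun _ : Fin 7 × Fin 7 => false) := not_coset_zero

lemma inCode11 : inCode true (fun _ : Fin 7 × Fin 7 => true) :=
  ⟨fun _ => false, fun _ _ => false, by funext q; simp [congrFun Lmap_zero q]⟩

lemma not_inCode01 : ¬ inCode false (fun _ : Fin 7 × Fin 7 => true) := by
  rintro ⟨t, s, h⟩
  apply one_ne_Lmap t s
  funext q
  have h2 : true = xor (Lmap t s q) false := congrFun h q
  simpa using h2.symm

lemma v00 : steaneConcat false (fun _ : Fin 7 × Fin 7 => false) = (4096 : ℂ)⁻¹ := by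
  rw [steaneConcat_eq, if_pos inCode00]

lemma v10 : steaneConcat true (fun _ : Fin 7 × Fin 7 => false) = 0 := by
  rw [steaneConcat_eq, if_neg not_inCode10]

lemma v01 : steaneConcat false (fun _ : Fin 7 × Fin 7 => true) = 0 := by
  rw [steaneConcat_eq, if_neg not_inCode01]

lemma v11 : steaneConcat true (fun _ : Fin 7 × Fin 7 => true) = (4096 : ℂ)⁻¹ := by
  rw [steaneConcat_eq, if_pos inCode11]

lemma main_ge9 : ∀ c : ℂ, Qproj * qq.toMatrix * Qproj ≠ c • Qproj := by
  intro c hc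
  have hM : ∀ z w : V49, qq.toMatrix z w =
      1 * ((if z = fun q => xor (w q) ((fun _ : Fin 7 × Fin 7 => false) q) then 1 else 0) *
        sgn w gT) := by
    intro z w
    rw [toMatrix_entry, qq_K]
    simp only [qq_fOf, qq_gOf]
  have h00 : (∑ z, ∑ w, steaneConcat false z * qq.toMatrix z w * steaneConcat false w) = 1 := by
    rw [master (fun _ => false) gT 1 qq.toMatrix hM false false]
    simp only [Bool.xor_self]
    rw [if_pos inCode_zero, if_pos qq_Gperp, sgn_false_left]
    ring
  have h11 : (∑ z, ∑ w, steaneConcat true z * qq.toMatrix z w * steaneConcat true w) = -1 := by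
    rw [master (fun _ => false) gT 1 qq.toMatrix hM true true]
    simp only [Bool.xor_self]
    rw [if_pos inCode_zero, if_pos qq_Gperp, sgn_one_gT]
    ring
  have h01 : (∑ z, ∑ w, steaneConcat false z * qq.toMatrix z w * steaneConcat true w) = 0 := by
    rw [master (fun _ => false) gT 1 qq.toMatrix hM false true]
    simp only [Bool.false_xor]
    rw [if_neg not_coset_zero]
    ring
  have h10 : (∑ z, ∑ w, steaneConcat true z * qq.toMatrix z w * steaneConcat false w) = 0 := by
    rw [master (fun _ => false) gT 1 qq.toMatrix hM true false]
    simp only [Bool.xor_false]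
    rw [if_neg not_coset_zero]
    ring
  have e0 := congrFun (congrFun hc (fun _ => false)) (fun _ => false)
  have e1 := congrFun (congrFun hc (fun _ => true)) (fun _ => true)
  rw [show (Qproj * qq.toMatrix * Qproj) (fun _ => false) (fun _ => false) = _ from
    QMQ_apply qq.toMatrix _ _, h00, h01, h10, h11] at e0
  rw [show (Qproj * qq.toMatrix * Qproj) (fun _ => true) (fun _ => true) = _ from
    QMQ_apply qq.toMatrix _ _, h00, h01, h10, h11] at e1
  simp only [Matrix.smul_apply, Qproj, Matrix.of_apply, smul_eq_mul] at e0 e1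
  rw [v00, v10] at e0
  rw [v01, v11] at e1
  have hcontra : (2 : ℂ) * ((4096 : ℂ)⁻¹ * (4096 : ℂ)⁻¹) = 0 := by
    linear_combination e0 - e1
  norm_num at hcontra

end Stmt16Aux

/-- the 49-qubit concatenated Steane code has distance exactly 9:
for `Π` the orthogonal projection onto the codespace (characterized as the Hermitian
map fixing the codespace with range inside it), every 49-qubit Pauli operator of
weight at most 8 satisfies `Π P Π = c_P Π`, while some Pauli operator of weight 9
violates this. -/
theorem stmt16 (Pm : Matrix (Fin 7 × Fin 7 → Bool) (Fin 7 × Fin 7 → Bool) ℂ)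
    (hrange : ∀ u, Pm.mulVec u ∈ Submodule.span ℂ {steaneConcat false, steaneConcat true})
    (hfix : ∀ u ∈ Submodule.span ℂ {steaneConcat false, steaneConcat true},
      Pm.mulVec u = u)
    (hherm : Pmᴴ = Pm) :
    (∀ p : PauliOp (Fin 7 × Fin 7), p.weight ≤ 8 →
      ∃ c : ℂ, Pm * p.toMatrix * Pm = c • Pm) ∧
    (∃ q : PauliOp (Fin 7 × Fin 7), q.weight = 9 ∧
      ∀ c : ℂ, Pm * q.toMatrix * Pm ≠ c • Pm) := by
  have hPm : Pm = Stmt16Aux.Qproj := Stmt16Aux.Pm_eq_Qproj Pm hrange hfix hherm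
  subst hPm
  constructor
  · intro p hw
    exact Stmt16Aux.main_le8 p hw
  · exact ⟨Stmt16Aux.qq, Stmt16Aux.qq_weight, Stmt16Aux.main_ge9⟩

end
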